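/- Let H and L be real Hilbert spaces, Φ : H → L a bounded linear operator with adjoint Φ*, A ⊆ H a symmetric set containing 0 (e.g. a union of linear subspaces), y ∈ L, μ > 0 and α > 0 with 1/μ < 1.5·α. Assume for all x₁, x₂ ∈ A: α‖x₁ + x₂‖² ≤ ‖Φ(x₁ + x₂)‖² ≤ (1/μ)‖x₁ + x₂‖². Let (xⁿ) be a sequence with x⁰ = 0 and, for each n, xⁿ⁺¹ ∈ A a best approximation in A to xⁿ + μΦ*(y − Φxⁿ). Then for every x_A ∈ A and every k ∈ ℕ: ‖x_A − x^k‖² ≤ (2(1/(μα) − 1))^k·‖x_A‖² + c·‖y − Φx_A‖², where c = 4/(3α − 2/μ). -/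

import Mathlib

open scoped RealInnerProductSpace

set_option maxHeartbeats 2000000

/-- geometric convergence of the Iterative Projection Algorithm iterates. -/
theorem stmt_7
    {H L : Type*} [NormedAddCommGroup H] [InnerProductSpace ℝ H] [CompleteSpace H]
    [NormedAddCommGroup L] [InnerProductSpace ℝ L] [CompleteSpace L]
    (Φ : H →L[ℝ] L) (A : Set H)
    (hzero : (0 : H) ∈ A) (hsym : ∀ x ∈ A, -x ∈ A)
    (y : L) (μ α : ℝ) (hμ : 0 < μ) (hα : 0 < α) (hcond : 1 / μ < 1.5 * α)
    (hbi : ∀ x₁ ∈ A, ∀ x₂ ∈ A,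
      α * ‖x₁ + x₂‖ ^ 2 ≤ ‖Φ (x₁ + x₂)‖ ^ 2 ∧ ‖Φ (x₁ + x₂)‖ ^ 2 ≤ (1 / μ) * ‖x₁ + x₂‖ ^ 2)
    (xseq : ℕ → H) (hinit : xseq 0 = 0)
    (hstep : ∀ n, xseq (n + 1) ∈ A ∧ ∀ z ∈ A,
      ‖xseq (n + 1) - (xseq n + μ • (ContinuousLinearMap.adjoint Φ) (y - Φ (xseq n)))‖ ≤
      ‖z - (xseq n + μ • (ContinuousLinearMap.adjoint Φ) (y - Φ (xseq n)))‖) :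
    ∀ xA ∈ A, ∀ k : ℕ,
      ‖xA - xseq k‖ ^ 2 ≤
        (2 * (1 / (μ * α) - 1)) ^ k * ‖xA‖ ^ 2 + (4 / (3 * α - 2 / μ)) * ‖y - Φ xA‖ ^ 2 := by
  intro xA hxA k
  have h2μ : 2 / μ = 2 * (1 / μ) := by ring
  have hden : (0:ℝ) < 3 * α - 2 / μ := by rw [h2μ]; linarith
  have hden' : 3 * α - 2 / μ ≠ 0 := ne_of_gt hden
  have hcpos : (0:ℝ) < 4 / (3 * α - 2 / μ) := div_pos (by norm_num) hden
  have hA : ∀ n, xseq n ∈ A := by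
    intro n
    cases n with
    | zero => rw [hinit]; exact hzero
    | succ m => exact (hstep m).1
  by_cases hs : μ * α ≤ 1
  · -- main case
    have hμα : (0:ℝ) < μ * α := mul_pos hμ hα
    have hγ0 : (0:ℝ) ≤ 2 * (1 / (μ * α) - 1) := by
      have h1 : 1 ≤ 1 / (μ * α) := by
        rw [le_div_iff₀ hμα]; linarith
      linarith
    have hdiff : ∀ x₁ ∈ A, ∀ x₂ ∈ A,
        α * ‖x₁ - x₂‖ ^ 2 ≤ ‖Φ (x₁ - x₂)‖ ^ 2 ∧
        ‖Φ (x₁ - x₂)‖ ^ 2 ≤ (1 / μ) * ‖x₁ - x₂‖ ^ 2 := by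
      intro x₁ h₁ x₂ h₂
      simpa [sub_eq_add_neg] using hbi x₁ h₁ (-x₂) (hsym x₂ h₂)
    have key : ∀ n, ‖xA - xseq (n+1)‖ ^ 2 ≤
        (2 * (1 / (μ * α) - 1)) * ‖xA - xseq n‖ ^ 2 + (4 / α) * ‖y - Φ xA‖ ^ 2 := by
      intro n
      rw [norm_sub_rev xA (xseq (n+1)), norm_sub_rev xA (xseq n)]
      obtain h1 := (hstep n).2 xA hxA
      set T := ContinuousLinearMap.adjoint Φ with hT
      set u : H := xseq (n+1) - xA with hu
      set v : H := xseq n - xA with hv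
      set e : L := y - Φ xA with he
      set a : H := xseq n + μ • T (y - Φ (xseq n)) with ha
      clear_value T u v e a
      have hproj : ‖u‖ ^ 2 ≤ 2 * ⟪u, a - xA⟫ := by
        have h1' : ‖xseq (n+1) - a‖ ^ 2 ≤ ‖xA - a‖ ^ 2 :=
          pow_le_pow_left₀ (norm_nonneg _) h1 2
        have e1 : xseq (n+1) - a = u - (a - xA) := by rw [hu]; abel
        have e2 : ‖xA - a‖ = ‖a - xA‖ := norm_sub_rev _ _
        rw [e1, e2] at h1'
        have := norm_sub_sq_real u (a - xA)
        linarith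
      have hyv : y - Φ (xseq n) = e - Φ v := by
        rw [he, hv, map_sub]; abel
      have haxA : a - xA = v + μ • T (e - Φ v) := by
        rw [← hyv, ha, hv]; abel
      have hinner : ⟪u, a - xA⟫ = ⟪u, v⟫ + μ * ⟪Φ u, e⟫ - μ * ⟪Φ u, Φ v⟫ := by
        rw [haxA, inner_add_right, real_inner_smul_right, hT,
            ContinuousLinearMap.adjoint_inner_right]
        rw [inner_sub_right]
        ring
      have p1 : 2 * ⟪u, v⟫ = ‖u‖^2 + ‖v‖^2 - ‖u - v‖^2 := by
        have := norm_sub_sq_real u v; linarith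
      have p2 : 2 * ⟪Φ u, Φ v⟫ = ‖Φ u‖^2 + ‖Φ v‖^2 - ‖Φ (u - v)‖^2 := by
        have := norm_sub_sq_real (Φ u) (Φ v)
        rw [← map_sub] at this
        linarith
      have p2' : μ * (2 * ⟪Φ u, Φ v⟫) =
          μ * (‖Φ u‖^2 + ‖Φ v‖^2 - ‖Φ (u - v)‖^2) := by rw [p2]
      have bu : α * ‖u‖^2 ≤ ‖Φ u‖^2 := by rw [hu]; exact (hdiff _ (hA (n+1)) _ hxA).1
      have bv : α * ‖v‖^2 ≤ ‖Φ v‖^2 := by rw [hv]; exact (hdiff _ (hA n) _ hxA).1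
      have huv : u - v = xseq (n+1) - xseq n := by rw [hu, hv]; abel
      have bw : ‖Φ (u - v)‖^2 ≤ (1/μ) * ‖u - v‖^2 := by
        rw [huv]; exact (hdiff _ (hA (n+1)) _ (hA n)).2
      have bw' : μ * ‖Φ (u - v)‖^2 ≤ ‖u - v‖^2 := by
        have h := mul_le_mul_of_nonneg_left bw hμ.le
        have hh : μ * ((1/μ) * ‖u - v‖^2) = ‖u - v‖^2 := by field_simp
        linarith
      have bv' : μ * (α * ‖v‖^2) ≤ μ * ‖Φ v‖^2 := mul_le_mul_of_nonneg_left bv hμ.le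
      have cross : μ * ⟪Φ u, e⟫ ≤ μ * (‖Φ u‖ * ‖e‖) :=
        mul_le_mul_of_nonneg_left (real_inner_le_norm _ _) hμ.le
      have young : 2 * (μ * (‖Φ u‖ * ‖e‖)) ≤ (μ/2) * ‖Φ u‖^2 + 2 * μ * ‖e‖^2 := by
        nlinarith [mul_nonneg hμ.le (sq_nonneg (‖Φ u‖ - 2 * ‖e‖))]
      rw [hinner] at hproj
      have main2 : (μ/2) * ‖Φ u‖^2 ≤ (1 - μ*α) * ‖v‖^2 + 2*μ*‖e‖^2 := by
        linarith [hproj, p1, p2', bv', bw', cross, young]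
      have hbu2 : (μ/2) * (α * ‖u‖^2) ≤ (μ/2) * ‖Φ u‖^2 :=
        mul_le_mul_of_nonneg_left bu (by positivity)
      have hgoal' : (μ*α/2) * ‖u‖^2 ≤ (1 - μ*α)*‖v‖^2 + 2*μ*‖e‖^2 := by
        nlinarith [hbu2, main2]
      have c1 : (μ*α/2) * ((2*(1/(μ*α)-1)) * ‖v‖^2) = (1 - μ*α) * ‖v‖^2 := by
        field_simp
      have c2 : (μ*α/2) * ((4/α) * ‖e‖^2) = 2*μ*‖e‖^2 := by
        field_simp
        ring
      have hpos2 : (0:ℝ) < μ*α/2 := by positivity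
      have final : (μ*α/2) * ‖u‖^2 ≤
          (μ*α/2) * ((2*(1/(μ*α)-1)) * ‖v‖^2 + (4/α) * ‖e‖^2) := by
        rw [mul_add, c1, c2]; exact hgoal'
      exact le_of_mul_le_mul_left final hpos2
    have ind : ∀ m, ‖xA - xseq m‖^2 ≤ (2*(1/(μ*α)-1))^m * ‖xA‖^2
        + (4/(3*α-2/μ)) * (1 - (2*(1/(μ*α)-1))^m) * ‖y - Φ xA‖^2 := by
      intro m
      induction m with
      | zero => simp [hinit]
      | succ m ih =>
        have hk := key m
        have hmul := mul_le_mul_of_nonneg_left ih hγ0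
        have h32 : (0:ℝ) < 3*μ*α - 2 := by
          have hh : μ*(3*α - 2/μ) = 3*μ*α - 2 := by field_simp
          nlinarith [mul_pos hμ hden]
        have hcc : (4/(3*α-2/μ)) * (1 - 2*(1/(μ*α)-1)) = 4/α := by
          have hX : (0:ℝ) < -(μ*α*2) + μ^2*α^2*3 := by nlinarith [mul_pos hμα h32]
          have hXi : (-(μ*α*2) + μ^2*α^2*3) * (-(μ*α*2) + μ^2*α^2*3)⁻¹ = 1 :=
            mul_inv_cancel₀ hX.ne'
          have e1 : (3*α - 2/μ) * μ = 3*μ*α-2 := by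
            have h' := div_mul_cancel₀ (2:ℝ) hμ.ne'
            linear_combination (-1) * h'
          have e2 : (1 - 2*(1/(μ*α)-1)) * (μ*α) = 3*μ*α-2 := by
            have h := one_div_mul_cancel hμα.ne'
            linear_combination (-2) * h
          have e3 : (1 - 2*(1/(μ*α)-1)) * α = 3*α - 2/μ := by
            apply mul_right_cancel₀ hμ.ne'
            linear_combination e2 - e1
          rw [div_mul_eq_mul_div, div_eq_div_iff hden' hα.ne']
          linear_combination 4 * e3
        have hpow : (2*(1/(μ*α)-1))^(m+1) = (2*(1/(μ*α)-1)) * (2*(1/(μ*α)-1))^m := by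
          ring
        rw [hpow]
        nlinarith [hk, hmul, hcc]
    have hE : (0:ℝ) ≤ ‖y - Φ xA‖^2 := sq_nonneg _
    have hpk : (0:ℝ) ≤ (2*(1/(μ*α)-1))^k := pow_nonneg hγ0 k
    nlinarith [ind k, mul_nonneg (mul_nonneg hcpos.le hpk) hE]
  · push_neg at hs
    have hA0 : ∀ x ∈ A, x = 0 := by
      intro x hx
      by_contra hne
      have hb := hbi x hx x hx
      have hxx : x + x ≠ 0 := by
        intro h
        have h2 : (2:ℝ) • x = 0 := by rw [two_smul]; exact h
        rcases smul_eq_zero.mp h2 with h' | h'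
        · norm_num at h'
        · exact hne h'
      have hpos : 0 < ‖x + x‖^2 := pow_pos (norm_pos_iff.mpr hxx) 2
      have hle : α * ‖x+x‖^2 ≤ (1/μ) * ‖x+x‖^2 := hb.1.trans hb.2
      have hαμ : α ≤ 1/μ := le_of_mul_le_mul_right hle hpos
      have hcon : μ * α ≤ 1 := by
        have h3 := mul_le_mul_of_nonneg_left hαμ hμ.le
        rw [show μ * (1/μ) = 1 from by field_simp] at h3
        linarith
      linarith
    have hx0 : ∀ m, xseq m = 0 := by
      intro m; cases m with
      | zero => exact hinit
      | succ m => exact hA0 _ (hstep m).1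
    have hxA0 : xA = 0 := hA0 xA hxA
    rw [hxA0, hx0 k]
    simp only [sub_self, norm_zero, map_zero, sub_zero]
    have h4 : (0:ℝ) ≤ (4/(3*α-2/μ)) * ‖y‖^2 := mul_nonneg hcpos.le (sq_nonneg _)
    nlinarith [h4]
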